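/- Let d, τ, r^{-1}, λ > 0 be fixed and define N(m) = (m + τ(λτ + d)) / (2λ[m(r^{-1} + d) + τ d(r^{-1} + λτ + d)]) for m > 0. Then N is strictly decreasing in m, with lim_{m→0⁺} N(m) = (λτ + d)/(2λd(r^{-1} + λτ + d)) and lim_{m→∞} N(m) = 1/(2λ(r^{-1} + d)). -/

import Mathlib

open Filter Topology Set

/-- The squared L2 norm `N(m)` of the closed-loop turbine-generator impulse response
is strictly decreasing in the inertia `m`, with the stated limits as `m → 0⁺` and
`m → ∞`. -/
theorem stmt8 (d τ rinv lam : ℝ) (hd : 0 < d) (hτ : 0 < τ) (hr : 0 < rinv)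
    (hlam : 0 < lam) :
    StrictAntiOn
        (fun m : ℝ => (m + τ * (lam * τ + d)) /
          (2 * lam * (m * (rinv + d) + τ * d * (rinv + lam * τ + d)))) (Ioi 0) ∧
    Tendsto (fun m : ℝ => (m + τ * (lam * τ + d)) /
          (2 * lam * (m * (rinv + d) + τ * d * (rinv + lam * τ + d))))
        (𝓝[>] 0) (𝓝 ((lam * τ + d) / (2 * lam * d * (rinv + lam * τ + d)))) ∧
    Tendsto (fun m : ℝ => (m + τ * (lam * τ + d)) /
          (2 * lam * (m * (rinv + d) + τ * d * (rinv + lam * τ + d))))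
        atTop (𝓝 (1 / (2 * lam * (rinv + d)))) := by
  have hC : 0 < τ * d * (rinv + lam * τ + d) := by positivity
  refine ⟨?_, ?_, ?_⟩
  · intro x hx y hy hxy
    simp only [mem_Ioi] at hx hy
    have hdx : 0 < 2 * lam * (x * (rinv + d) + τ * d * (rinv + lam * τ + d)) := by
      positivity
    have hdy : 0 < 2 * lam * (y * (rinv + d) + τ * d * (rinv + lam * τ + d)) := by
      positivity
    rw [div_lt_div_iff₀ hdy hdx]
    nlinarith [mul_pos (mul_pos (mul_pos hτ hτ) hlam) (mul_pos hr (sub_pos.2 hxy)),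
      mul_pos hlam (sub_pos.2 hxy)]
  · have hcont : ContinuousAt (fun m : ℝ => (m + τ * (lam * τ + d)) /
        (2 * lam * (m * (rinv + d) + τ * d * (rinv + lam * τ + d)))) 0 := by
      apply ContinuousAt.div (by fun_prop) (by fun_prop)
      simp only [zero_mul, zero_add]
      positivity
    have h := hcont.continuousWithinAt (s := Ioi 0)
    rw [ContinuousWithinAt] at h
    convert h using 2
    field_simp
    ring
  · have h1 : Tendsto (fun m : ℝ => 1 + τ * (lam * τ + d) / m) atTop (𝓝 1) := by
      have := tendsto_const_nhds (α := ℝ) (x := τ * (lam * τ + d)) (f := atTop)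
        |>.div_atTop tendsto_id
      simpa using (tendsto_const_nhds (x := (1:ℝ))).add this
    have h2 : Tendsto (fun m : ℝ =>
        2 * lam * ((rinv + d) + τ * d * (rinv + lam * τ + d) / m)) atTop
        (𝓝 (2 * lam * (rinv + d))) := by
      have := tendsto_const_nhds (α := ℝ) (x := τ * d * (rinv + lam * τ + d))
        (f := atTop) |>.div_atTop tendsto_id
      have h := ((tendsto_const_nhds (x := (rinv + d : ℝ))).add this).const_mul
        (2 * lam)
      simpa using h
    have hne : 2 * lam * (rinv + d) ≠ 0 := by positivity
    have := h1.div h2 hne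
    apply this.congr'
    filter_upwards [eventually_gt_atTop (0:ℝ)] with m hm
    simp only [Pi.div_apply]
    rw [div_eq_div_iff (by positivity) (by positivity)]
    field_simp
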